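/- arXiv:1508.06019 — 4 statements merged into one kernel-verified Lean document; each statement's English description precedes it below -/
import Mathlib

section
/- Let w : Fin n → ℤ be weights. If a = |{∑_{i∈X} w i : X ⊆ Fin n}| is the number of distinct subset sums and b = max over x ∈ ℤ of the number of subsets X ⊆ Fin n with ∑_{i∈X} w i = x, then there exist sets A, B ⊆ {0,1}^n (identifying subsets with indicator vectors) with |A| = a, |B| = b, and |A + B| = |A|·|B|, where addition is coordinatewise over ℤ. -/
open Pointwise

noncomputable section

def ind {n : ℕ} (X : Finset (Fin n)) : Fin n → ℤ := fun i => if i ∈ X then 1 else 0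

lemma ind_inj {n : ℕ} : Function.Injective (ind (n := n)) := by
  intro X Y h
  ext i
  have := congrFun h i
  simp only [ind] at this
  by_cases hX : i ∈ X <;> by_cases hY : i ∈ Y <;> simp [hX, hY] at this ⊢

lemma dot_ind {n : ℕ} (w : Fin n → ℤ) (X : Finset (Fin n)) :
    ∑ i, w i * ind X i = ∑ i ∈ X, w i := by
  simp [ind, mul_ite, Finset.sum_ite_mem]

theorem stmt1 {n : ℕ} (w : Fin n → ℤ) (a b : ℕ)
    (ha : a = ((Finset.univ : Finset (Finset (Fin n))).image (fun X => ∑ i ∈ X, w i)).card)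
    (hb : IsGreatest {m : ℕ | ∃ x : ℤ,
      m = ((Finset.univ : Finset (Finset (Fin n))).filter (fun X => ∑ i ∈ X, w i = x)).card} b) :
    ∃ A B : Finset (Fin n → ℤ),
      (∀ v ∈ A, ∀ i, v i = 0 ∨ v i = 1) ∧ (∀ v ∈ B, ∀ i, v i = 0 ∨ v i = 1) ∧
      A.card = a ∧ B.card = b ∧ (A + B).card = A.card * B.card := by
  classical
  set S := ((Finset.univ : Finset (Finset (Fin n))).image (fun X => ∑ i ∈ X, w i)) with hS
  -- choice of representative
  have hrep : ∀ s ∈ S, ∃ X : Finset (Fin n), ∑ i ∈ X, w i = s := by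
    intro s hs
    simp only [hS, Finset.mem_image, Finset.mem_univ, true_and] at hs
    exact hs
  choose rep hrepspec using hrep
  let A : Finset (Fin n → ℤ) := S.attach.image (fun s => ind (rep s.1 s.2))
  obtain ⟨x0, hx0⟩ := hb.1
  let B : Finset (Fin n → ℤ) :=
    ((Finset.univ : Finset (Finset (Fin n))).filter (fun X => ∑ i ∈ X, w i = x0)).image ind
  have hA01 : ∀ v ∈ A, ∀ i, v i = 0 ∨ v i = 1 := by
    intro v hv i
    simp only [A, Finset.mem_image] at hv
    obtain ⟨s, _, rfl⟩ := hv
    by_cases h : i ∈ rep s.1 s.2 <;> simp [ind, h]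
  have hB01 : ∀ v ∈ B, ∀ i, v i = 0 ∨ v i = 1 := by
    intro v hv i
    simp only [B, Finset.mem_image] at hv
    obtain ⟨X, _, rfl⟩ := hv
    by_cases h : i ∈ X <;> simp [ind, h]
  -- dot product of elements of A recovers s
  have hdotA : ∀ v ∈ A, ∃ s, ∃ hs : s ∈ S, v = ind (rep s hs) ∧ ∑ i, w i * v i = s := by
    intro v hv
    simp only [A, Finset.mem_image, Finset.mem_attach, true_and] at hv
    obtain ⟨⟨s, hs⟩, rfl⟩ := hv
    exact ⟨s, hs, rfl, by rw [dot_ind]; exact hrepspec s hs⟩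
  have hdotB : ∀ v ∈ B, ∑ i, w i * v i = x0 := by
    intro v hv
    simp only [B, Finset.mem_image, Finset.mem_filter, Finset.mem_univ, true_and] at hv
    obtain ⟨X, hX, rfl⟩ := hv
    rw [dot_ind]; exact hX
  have hAcard : A.card = a := by
    rw [ha]
    have : A.card = S.attach.card := by
      apply Finset.card_image_of_injective
      intro s t h
      have h2 := congrArg (fun v => ∑ i, w i * v i) h
      simp only [dot_ind] at h2
      rw [hrepspec s.1 s.2, hrepspec t.1 t.2] at h2
      exact Subtype.ext h2
    rw [this, Finset.card_attach]
  have hBcard : B.card = b := by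
    rw [hx0]
    exact Finset.card_image_of_injective _ ind_inj
  refine ⟨A, B, hA01, hB01, hAcard, hBcard, ?_⟩
  rw [← Finset.image_add_product]
  rw [Finset.card_image_of_injOn, Finset.card_product]
  rintro ⟨a1, b1⟩ h1 ⟨a2, b2⟩ h2 hsum
  simp only [Finset.mem_coe, Finset.mem_product] at h1 h2
  simp only [Prod.mk.injEq] at hsum ⊢
  have hd : ∑ i, w i * (a1 + b1) i = ∑ i, w i * (a2 + b2) i := by rw [hsum]
  obtain ⟨s1, hs1', he1, hv1⟩ := hdotA a1 h1.1
  obtain ⟨s2, hs2', he2, hv2⟩ := hdotA a2 h2.1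
  have hb1 := hdotB b1 h1.2
  have hb2 := hdotB b2 h2.2
  simp only [Pi.add_apply, mul_add, Finset.sum_add_distrib] at hd
  rw [hv1, hv2, hb1, hb2] at hd
  have hs12 : s1 = s2 := by omega
  subst hs12
  have ha12 : a1 = a2 := by rw [he1, he2]
  refine ⟨ha12, ?_⟩
  have := hsum
  rw [ha12] at this
  exact add_left_cancel this
end
end

section
/- For σ ∈ [0,1] fixed, the function g(σ,τ) = h(τσ/2, τσ/2 + (1−σ)/2, (1−σ)/2 + (1−τ)σ/2, (1−τ)σ/2) of τ ∈ [0,1] is maximized at τ = 1/2, where its value equals 1 + h(σ/2). -/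
noncomputable def binEnt (x : ℝ) : ℝ := -x * Real.logb 2 x - (1 - x) * Real.logb 2 (1 - x)

noncomputable def ent4 (x₁ x₂ x₃ x₄ : ℝ) : ℝ :=
  -x₁ * Real.logb 2 x₁ - x₂ * Real.logb 2 x₂ - x₃ * Real.logb 2 x₃ - x₄ * Real.logb 2 x₄

noncomputable def g (σ τ : ℝ) : ℝ :=
  ent4 (τ*σ/2) (τ*σ/2 + (1-σ)/2) ((1-σ)/2 + (1-τ)*σ/2) ((1-τ)*σ/2)

lemma gibbs_term (p q : ℝ) (hp : 0 ≤ p) (hq : 0 ≤ q) (h : q = 0 → p = 0) :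
    -p * Real.log p ≤ -p * Real.log q + (q - p) := by
  rcases eq_or_lt_of_le hp with hp0 | hp0
  · simp [← hp0]; linarith
  rcases eq_or_lt_of_le hq with hq0 | hq0
  · exact absurd (h hq0.symm) (ne_of_gt hp0)
  have hd : (0:ℝ) < q / p := by positivity
  have h1 : Real.log (q / p) ≤ q / p - 1 := Real.log_le_sub_one_of_pos hd
  have h2 : Real.log (q / p) = Real.log q - Real.log p :=
    Real.log_div (ne_of_gt hq0) (ne_of_gt hp0)
  have h3 : p * (Real.log q - Real.log p) ≤ p * (q / p - 1) := by
    rw [← h2]; exact mul_le_mul_of_nonneg_left h1 hp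
  have h4 : p * (q / p) = q := mul_div_cancel₀ q (ne_of_gt hp0)
  nlinarith [h3, h4]

lemma ent4_mul_log2 (x1 x2 x3 x4 : ℝ) :
    ent4 x1 x2 x3 x4 * Real.log 2 =
      -x1 * Real.log x1 - x2 * Real.log x2 - x3 * Real.log x3 - x4 * Real.log x4 := by
  have h2 : Real.log 2 ≠ 0 := ne_of_gt (Real.log_pos one_lt_two)
  simp only [ent4, Real.logb]
  field_simp

theorem stmt5 (σ : ℝ) (hσ : σ ∈ Set.Icc (0 : ℝ) 1) :
    (∀ τ ∈ Set.Icc (0 : ℝ) 1, g σ τ ≤ g σ (1/2)) ∧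
    g σ (1/2) = 1 + binEnt (σ/2) := by
  obtain ⟨hσ0, hσ1⟩ := hσ
  have hlog2 : (0:ℝ) < Real.log 2 := Real.log_pos one_lt_two
  have e1 : (1/2*σ/2 : ℝ) = σ/4 := by ring
  have e2 : (1/2*σ/2 + (1-σ)/2 : ℝ) = (2-σ)/4 := by ring
  have e3 : ((1-σ)/2 + (1-1/2)*σ/2 : ℝ) = (2-σ)/4 := by ring
  have e4 : ((1-1/2)*σ/2 : ℝ) = σ/4 := by ring
  have hghalf : g σ (1/2) = ent4 (σ/4) ((2-σ)/4) ((2-σ)/4) (σ/4) := by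
    rw [g, e2, e3, e4, e1]
  constructor
  · intro τ hτ
    obtain ⟨hτ0, hτ1⟩ := hτ
    have hq1 : (0:ℝ) ≤ σ/4 := by linarith
    have hq2 : (0:ℝ) ≤ (2-σ)/4 := by linarith
    have h1 := gibbs_term (τ*σ/2) (σ/4) (by positivity) hq1
      (by intro h; have hs : σ = 0 := by linarith
          rw [hs]; ring)
    have h2 := gibbs_term (τ*σ/2 + (1-σ)/2) ((2-σ)/4) (by nlinarith) hq2
      (by intro h; exfalso; linarith)
    have h3 := gibbs_term ((1-σ)/2 + (1-τ)*σ/2) ((2-σ)/4) (by nlinarith) hq2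
      (by intro h; exfalso; linarith)
    have h4 := gibbs_term ((1-τ)*σ/2) (σ/4) (by nlinarith) hq1
      (by intro h; have hs : σ = 0 := by linarith
          rw [hs]; ring)
    have key : g σ τ * Real.log 2 ≤ g σ (1/2) * Real.log 2 := by
      rw [hghalf, g, ent4_mul_log2, ent4_mul_log2]
      linarith
    exact le_of_mul_le_mul_right key hlog2
  · have hb : (2:ℝ) ≠ 0 := two_ne_zero
    by_cases hs : σ = 0
    · rw [hghalf, hs]
      norm_num [ent4, binEnt, Real.logb, Real.log_div]
    · have hσpos : 0 < σ := lt_of_le_of_ne hσ0 (Ne.symm hs)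
      have lb2 : Real.logb 2 2 = 1 := by simp
      have l1 : Real.logb 2 (σ/4) = Real.logb 2 (σ/2) - 1 := by
        have e : (σ/4 : ℝ) = (σ/2)/2 := by ring
        rw [e, Real.logb_div (ne_of_gt (by linarith)) hb, lb2]
      have l2 : Real.logb 2 ((2-σ)/4) = Real.logb 2 (1-σ/2) - 1 := by
        have e : ((2-σ)/4 : ℝ) = (1-σ/2)/2 := by ring
        rw [e, Real.logb_div (ne_of_gt (by linarith)) hb, lb2]
      rw [hghalf]
      simp only [ent4, binEnt, l1, l2]
      ring
end

section
/- Let w : Fin n → ℤ and let b : ℤ → ℕ count subsets of Fin n summing to each value. Then ∑_{r∈ℤ} b(r)² = ∑_{y ∈ {−1,0,1}^n, y·w = 0} 2^{|y⁻¹(0)|}, where y·w = ∑ᵢ yᵢ·wᵢ and y⁻¹(0) = {i : yᵢ = 0}. -/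
open Finset

def binOf {n : ℕ} (w : Fin n → ℤ) (S : Finset (Fin n)) (x : ℤ) : ℕ :=
  (S.powerset.filter (fun X => ∑ i ∈ X, w i = x)).card

private lemma indsum {n : ℕ} (w : Fin n → ℤ) (U : Finset (Fin n)) :
    ∑ i : Fin n, (if i ∈ U then (1:ℤ) else 0) * w i = ∑ i ∈ U, w i := by
  simp [ite_zero_mul, Finset.sum_ite_mem]

theorem stmt7 {n : ℕ} (w : Fin n → ℤ) :
    ∑ᶠ r : ℤ, (binOf w Finset.univ r)^2 =
    ∑ y ∈ Fintype.piFinset (fun _ : Fin n => ({-1, 0, 1} : Finset ℤ)),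
      (if ∑ i, y i * w i = 0
        then 2 ^ ((Finset.univ.filter (fun i => y i = 0)).card) else 0) := by
  classical
  set T : Finset ℤ := Finset.univ.powerset.image (fun X : Finset (Fin n) => ∑ i ∈ X, w i)
    with hT
  -- LHS as a finite sum
  have hsupp : (Function.support fun r : ℤ => (binOf w Finset.univ r)^2) ⊆ ↑T := by
    intro r hr
    have h0 : (Finset.univ.powerset.filter
        (fun X : Finset (Fin n) => ∑ i ∈ X, w i = r)).Nonempty := by
      have hr' : (binOf w Finset.univ r)^2 ≠ 0 := hr
      have hb : binOf w Finset.univ r ≠ 0 := fun h => hr' (by rw [h]; ring)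
      exact Finset.card_pos.mp (Nat.pos_of_ne_zero hb)
    obtain ⟨X, hX⟩ := h0
    simp only [Finset.mem_filter] at hX
    exact Finset.mem_coe.mpr (Finset.mem_image.mpr ⟨X, hX.1, hX.2⟩)
  rw [finsum_eq_sum_of_support_subset _ hsupp]
  -- pairs with equal sums
  set P := (Finset.univ.powerset ×ˢ Finset.univ.powerset).filter
      (fun p : Finset (Fin n) × Finset (Fin n) => ∑ i ∈ p.1, w i = ∑ i ∈ p.2, w i) with hP
  have hL : ∑ r ∈ T, (binOf w Finset.univ r)^2 = P.card := by
    have hmem : ∀ p ∈ P, (∑ i ∈ p.1, w i) ∈ T := by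
      intro p hp
      simp only [hP, Finset.mem_filter, Finset.mem_product] at hp
      exact Finset.mem_image.mpr ⟨p.1, hp.1.1, rfl⟩
    rw [Finset.card_eq_sum_card_fiberwise hmem]
    refine Finset.sum_congr rfl fun r _ => ?_
    have hfib : P.filter (fun p => ∑ i ∈ p.1, w i = r)
        = (Finset.univ.powerset.filter (fun X : Finset (Fin n) => ∑ i ∈ X, w i = r)) ×ˢ
          (Finset.univ.powerset.filter (fun X : Finset (Fin n) => ∑ i ∈ X, w i = r)) := by
      rw [← Finset.filter_product, hP, Finset.filter_filter]
      apply Finset.filter_congr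
      intro p _
      constructor
      · rintro ⟨h1, h2⟩; exact ⟨h2, h1 ▸ h2⟩
      · rintro ⟨h1, h2⟩; exact ⟨h1.trans h2.symm, h1⟩
    rw [binOf, hfib, Finset.card_product]
    ring
  rw [hL]
  -- RHS as a sigma card
  set zw : (Fin n → ℤ) → Finset (Fin n) := fun y => Finset.univ.filter (fun i => y i = 0)
    with hzw
  set Y := (Fintype.piFinset (fun _ : Fin n => ({-1, 0, 1} : Finset ℤ))).filter
      (fun y => ∑ i, y i * w i = 0) with hY
  have hR : ∑ y ∈ Fintype.piFinset (fun _ : Fin n => ({-1, 0, 1} : Finset ℤ)),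
      (if ∑ i, y i * w i = 0
        then 2 ^ ((Finset.univ.filter (fun i => y i = 0)).card) else 0)
      = ((Y.sigma fun y => (zw y).powerset).card : ℕ) := by
    rw [Finset.card_sigma, hY, Finset.sum_filter]
    refine Finset.sum_congr rfl fun y _ => ?_
    split
    · rw [Finset.card_powerset, hzw]
    · rfl
  rw [hR]
  -- the bijection
  refine Finset.card_nbij'
    (i := fun p => ⟨fun k => (if k ∈ p.1 then (1:ℤ) else 0) - (if k ∈ p.2 then 1 else 0),
      p.1 ∩ p.2⟩)
    (j := fun q => (q.2 ∪ Finset.univ.filter (fun k => q.1 k = 1),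
      q.2 ∪ Finset.univ.filter (fun k => q.1 k = -1)))
    ?_ ?_ ?_ ?_
  · -- maps into the sigma
    rintro ⟨U, V⟩ hp
    simp only [hP, Finset.mem_coe, Finset.mem_filter, Finset.mem_product] at hp
    rw [Finset.mem_coe, Finset.mem_sigma]
    constructor
    · rw [hY, Finset.mem_filter]
      constructor
      · rw [Fintype.mem_piFinset]
        intro k
        by_cases h1 : k ∈ U <;> by_cases h2 : k ∈ V <;> simp [h1, h2]
      · simp only [sub_mul, Finset.sum_sub_distrib, indsum]
        rw [hp.2]; ring
    · rw [Finset.mem_powerset, hzw]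
      intro k hk
      simp only [Finset.mem_inter] at hk
      simp [Finset.mem_filter, hk.1, hk.2]
  · -- maps back into P
    rintro ⟨y, Z⟩ hq
    rw [Finset.mem_coe, Finset.mem_sigma] at hq
    obtain ⟨hqY, hqZ⟩ := hq
    rw [hY, Finset.mem_filter] at hqY
    obtain ⟨hpi, hsum⟩ := hqY
    rw [Fintype.mem_piFinset] at hpi
    rw [Finset.mem_powerset, hzw] at hqZ
    have hZ0 : ∀ k ∈ Z, y k = 0 := by
      intro k hk
      have := hqZ hk
      simpa using this
    simp only [hP, Finset.mem_coe, Finset.mem_filter, Finset.mem_product, Finset.mem_powerset]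
    refine ⟨⟨Finset.subset_univ _, Finset.subset_univ _⟩, ?_⟩
    have hdisj1 : Disjoint Z (Finset.univ.filter (fun k => y k = 1)) := by
      rw [Finset.disjoint_left]
      intro k hk hk'
      simp only [Finset.mem_filter] at hk'
      have h0 := hZ0 k hk
      rw [h0] at hk'
      exact absurd hk'.2 (by norm_num)
    have hdisj2 : Disjoint Z (Finset.univ.filter (fun k => y k = -1)) := by
      rw [Finset.disjoint_left]
      intro k hk hk'
      simp only [Finset.mem_filter] at hk'
      have h0 := hZ0 k hk
      rw [h0] at hk'
      exact absurd hk'.2 (by norm_num)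
    rw [Finset.sum_union hdisj1, Finset.sum_union hdisj2]
    have key : ∑ k ∈ Finset.univ.filter (fun k => y k = 1), w k
        = ∑ k ∈ Finset.univ.filter (fun k => y k = -1), w k := by
      have e : ∀ k : Fin n, y k * w k
          = (if y k = 1 then w k else 0) - (if y k = -1 then w k else 0) := by
        intro k
        have := hpi k
        simp only [Finset.mem_insert, Finset.mem_singleton] at this
        rcases this with h | h | h <;> rw [h] <;> norm_num
      have : ∑ k, y k * w k
          = ∑ k ∈ Finset.univ.filter (fun k => y k = 1), w k
            - ∑ k ∈ Finset.univ.filter (fun k => y k = -1), w k := by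
        rw [Finset.sum_congr rfl (fun k _ => e k), Finset.sum_sub_distrib,
          Finset.sum_filter, Finset.sum_filter]
      rw [this] at hsum
      linarith
    rw [key]
  · -- left inverse
    rintro ⟨U, V⟩ hp
    simp only [Prod.mk.injEq]
    constructor
    · ext k
      simp only [Finset.mem_union, Finset.mem_inter, Finset.mem_filter, Finset.mem_univ,
        true_and]
      by_cases h1 : k ∈ U <;> by_cases h2 : k ∈ V <;> simp [h1, h2]
    · ext k
      simp only [Finset.mem_union, Finset.mem_inter, Finset.mem_filter, Finset.mem_univ,
        true_and]
      by_cases h1 : k ∈ U <;> by_cases h2 : k ∈ V <;> simp [h1, h2]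
  · -- right inverse
    rintro ⟨y, Z⟩ hq
    rw [Finset.mem_coe, Finset.mem_sigma] at hq
    obtain ⟨hqY, hqZ⟩ := hq
    rw [hY, Finset.mem_filter] at hqY
    obtain ⟨hpi, _⟩ := hqY
    rw [Fintype.mem_piFinset] at hpi
    rw [Finset.mem_powerset, hzw] at hqZ
    have hZ0 : ∀ k ∈ Z, y k = 0 := by
      intro k hk
      have := hqZ hk
      simpa using this
    have hy3 : ∀ k, y k = -1 ∨ y k = 0 ∨ y k = 1 := by
      intro k
      have := hpi k
      simp only [Finset.mem_insert, Finset.mem_singleton] at this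
      tauto
    have hfst : (fun k => (if k ∈ Z ∪ Finset.univ.filter (fun k => y k = 1) then (1:ℤ) else 0)
        - (if k ∈ Z ∪ Finset.univ.filter (fun k => y k = -1) then 1 else 0)) = y := by
      funext k
      by_cases hk : k ∈ Z
      · have := hZ0 k hk
        simp [hk, this]
      · rcases hy3 k with h | h | h <;>
          simp [hk, Finset.mem_union, Finset.mem_filter, h]
    have hsnd : (Z ∪ Finset.univ.filter (fun k => y k = 1))
        ∩ (Z ∪ Finset.univ.filter (fun k => y k = -1)) = Z := by
      ext k
      simp only [Finset.mem_inter, Finset.mem_union, Finset.mem_filter, Finset.mem_univ,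
        true_and]
      constructor
      · rintro ⟨h1 | h1, h2 | h2⟩
        · exact h1
        · exact h1
        · exact h2
        · exact absurd h2 (by rw [h1]; norm_num)
      · intro h; exact ⟨Or.inl h, Or.inl h⟩
    exact Sigma.ext hfst (heq_of_eq hsnd)
end

section
/- Suppose there exist weights w : Fin n → ℤ with at least 2^{0.997n} distinct subset sums and a value x attained by more than 2^{0.4996n} subsets. Then there exists a uniquely decodable code pair (A,B) in {0,1}^n with |A| ≥ 2^{0.997n} and |B| > 2^{0.4996n}. -/
open Pointwise

def sumsOf {n : ℕ} (w : Fin n → ℤ) (S : Finset (Fin n)) : Finset ℤ :=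
  S.powerset.image (fun Y => ∑ i ∈ Y, w i)

def indVec {n : ℕ} (S : Finset (Fin n)) : Fin n → ℤ := fun i => if i ∈ S then 1 else 0

lemma wsum_indVec {n : ℕ} (w : Fin n → ℤ) (S : Finset (Fin n)) :
    ∑ i, w i * indVec S i = ∑ i ∈ S, w i := by
  simp [indVec, mul_ite, Finset.sum_ite_mem]

lemma indVec_inj {n : ℕ} : Function.Injective (indVec (n := n)) := by
  intro S T h
  ext i
  have := congrFun h i
  simp only [indVec] at this
  by_cases hS : i ∈ S <;> by_cases hT : i ∈ T <;> simp [hS, hT] at this ⊢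

theorem stmt17 {n : ℕ} (w : Fin n → ℤ)
    (hsums : (2 : ℝ) ^ ((0.997 : ℝ) * n) ≤ ((sumsOf w Finset.univ).card : ℝ))
    (hbin : ∃ x : ℤ, (2 : ℝ) ^ ((0.4996 : ℝ) * n) < (binOf w Finset.univ x : ℝ)) :
    ∃ A B : Finset (Fin n → ℤ),
      (∀ v ∈ A, ∀ i, v i = 0 ∨ v i = 1) ∧ (∀ v ∈ B, ∀ i, v i = 0 ∨ v i = 1) ∧
      (A + B).card = A.card * B.card ∧
      (2 : ℝ) ^ ((0.997 : ℝ) * n) ≤ (A.card : ℝ) ∧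
      (2 : ℝ) ^ ((0.4996 : ℝ) * n) < (B.card : ℝ) := by
  obtain ⟨x, hx⟩ := hbin
  -- representative choice
  have hrep : ∀ s : {s // s ∈ sumsOf w Finset.univ},
      ∃ Y : Finset (Fin n), ∑ i ∈ Y, w i = s.1 := by
    rintro ⟨s, hs⟩
    simp only [sumsOf, Finset.mem_image] at hs
    obtain ⟨Y, _, hY⟩ := hs
    exact ⟨Y, hY⟩
  choose rep hrep' using hrep
  set A : Finset (Fin n → ℤ) :=
    (sumsOf w Finset.univ).attach.image (fun s => indVec (rep s)) with hA
  set B : Finset (Fin n → ℤ) :=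
    (Finset.univ.powerset.filter (fun X => ∑ i ∈ X, w i = x)).image indVec with hB
  have hwA : ∀ a ∈ A, ∑ i, w i * a i ∈ sumsOf w Finset.univ ∧
      (∀ a' ∈ A, (∑ i, w i * a i) = (∑ i, w i * a' i) → a = a') := by
    intro a ha
    simp only [hA, Finset.mem_image, Finset.mem_attach, true_and] at ha
    obtain ⟨s, hs⟩ := ha
    constructor
    · rw [← hs, wsum_indVec, hrep']; exact s.2
    · intro a' ha' heq
      simp only [hA, Finset.mem_image, Finset.mem_attach, true_and] at ha'
      obtain ⟨t, ht⟩ := ha'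
      rw [← hs, ← ht, wsum_indVec, wsum_indVec, hrep', hrep'] at heq
      rw [← hs, ← ht]
      exact congrArg (fun s => indVec (rep s)) (Subtype.ext heq)
  have hwB : ∀ b ∈ B, ∑ i, w i * b i = x := by
    intro b hb
    simp only [hB, Finset.mem_image, Finset.mem_filter] at hb
    obtain ⟨X, ⟨_, hX⟩, hXb⟩ := hb
    rw [← hXb, wsum_indVec, hX]
  have hcardA : A.card = (sumsOf w Finset.univ).card := by
    rw [hA, Finset.card_image_of_injOn, Finset.card_attach]
    intro s _ t _ h
    have := congrArg (fun v => ∑ i, w i * v i) h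
    simp only [wsum_indVec, hrep'] at this
    exact Subtype.ext this
  have hcardB : B.card = binOf w Finset.univ x := by
    rw [hB, binOf, Finset.card_image_of_injective _ indVec_inj]
  refine ⟨A, B, ?_, ?_, ?_, ?_, ?_⟩
  · intro v hv i
    simp only [hA, Finset.mem_image] at hv
    obtain ⟨s, _, hs⟩ := hv
    rw [← hs]; unfold indVec; split <;> simp
  · intro v hv i
    simp only [hB, Finset.mem_image] at hv
    obtain ⟨X, _, hX⟩ := hv
    rw [← hX]; unfold indVec; split <;> simp
  · rw [Finset.add_def, Finset.card_image_of_injOn, Finset.card_product]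
    rintro ⟨a, b⟩ hab ⟨a', b'⟩ hab' h
    simp only [Finset.mem_coe, Finset.coe_product, Set.mem_prod] at hab hab'
    obtain ⟨ha, hb⟩ := hab
    obtain ⟨ha', hb'⟩ := hab'
    simp only at h
    have hsum : ∑ i, w i * (a i + b i) = ∑ i, w i * (a' i + b' i) := by
      congr 1; ext i; rw [show a i + b i = (a + b) i from rfl, h]; rfl
    simp only [mul_add, Finset.sum_add_distrib] at hsum
    rw [hwB b hb, hwB b' hb'] at hsum
    have haa : a = a' := (hwA a ha).2 a' ha' (by linarith)
    have hbb : b = b' := by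
      have := h
      rw [haa] at this
      exact add_left_cancel this
    simp [haa, hbb]
  · rw [hcardA]; exact hsums
  · rw [hcardB]; exact hx
end
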